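/- Let ℓ ≥ 3, let G be a K_{ℓ,ℓ}-free finite simple graph, and let C be a set of vertices of G with |C| ≥ (3ℓ)^{4ℓ}. Then the number of vertices v of G such that v is adjacent to at least |C|/(8ℓ) vertices of C is at most (3ℓ)^{2ℓ}. -/

import Mathlib

/-- `G` is `K_{ℓ,ℓ}`-free: there are no two disjoint sets of vertices `A, B` of size `ℓ`
with every vertex of `A` adjacent to every vertex of `B`. -/
def KllFree {V : Type*} [DecidableEq V] (G : SimpleGraph V) (ℓ : ℕ) : Prop :=
  ¬ ∃ A B : Finset V, Disjoint A B ∧ A.card = ℓ ∧ B.card = ℓ ∧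
      ∀ a ∈ A, ∀ b ∈ B, G.Adj a b

theorem few_high_degree_into_class {V : Type*} [Fintype V] [DecidableEq V]
    (G : SimpleGraph V) [DecidableRel G.Adj] (ℓ : ℕ) (hℓ : 3 ≤ ℓ)
    (hfree : KllFree G ℓ) (C : Finset V) (hC : (3 * ℓ) ^ (4 * ℓ) ≤ C.card) :
    {v : V | (C.card : ℝ) / (8 * ℓ) ≤ ((C.filter (fun c => G.Adj v c)).card : ℝ)}.ncard
      ≤ (3 * ℓ) ^ (2 * ℓ) := by
  classical
  set m := C.card with hm
  set D := m / (8 * ℓ) with hD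
  set H : Finset V := Finset.univ.filter
      (fun v => (m : ℝ) / (8 * ℓ) ≤ ((C.filter (fun c => G.Adj v c)).card : ℝ)) with hH
  have hset : {v : V | (C.card : ℝ) / (8 * ℓ) ≤ ((C.filter (fun c => G.Adj v c)).card : ℝ)}
      = (H : Set V) := by
    ext v; simp [hH, hm]
  rw [hset, Set.ncard_coe_finset]
  -- basic numeric facts
  have hℓ0 : 0 < ℓ := by omega
  have hm4 : (3 * ℓ) ^ 4 ≤ m := le_trans (Nat.pow_le_pow_right (by omega) (by omega)) hC
  have hm72 : 8 * ℓ * (9 * ℓ - 1) ≤ m := by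
    have h1 : 8 * ℓ * (9 * ℓ - 1) ≤ 72 * (ℓ * ℓ) := by
      calc 8 * ℓ * (9 * ℓ - 1) ≤ 8 * ℓ * (9 * ℓ) :=
            Nat.mul_le_mul_left _ (by omega)
        _ = 72 * (ℓ * ℓ) := by ring
    have hll : 1 ≤ ℓ * ℓ := by nlinarith
    have h2 : 72 * (ℓ * ℓ) ≤ (3 * ℓ) ^ 4 := by nlinarith [hll]
    exact le_trans (le_trans h1 h2) hm4
  have hD9 : 9 * ℓ - 1 ≤ D := (Nat.le_div_iff_mul_le (by omega)).2 (by linarith [hm72])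
  have hDl : ℓ ≤ D := le_trans (by omega) hD9
  -- every v in H has at least D neighbours in C
  have hdeg : ∀ v ∈ H, D ≤ (C.filter (fun c => G.Adj v c)).card := by
    intro v hv
    rw [hH, Finset.mem_filter] at hv
    have h1 : (D : ℝ) ≤ ((C.filter (fun c => G.Adj v c)).card : ℝ) := by
      refine le_trans ?_ hv.2
      calc (D : ℝ) ≤ (m : ℝ) / ((8 * ℓ : ℕ) : ℝ) := Nat.cast_div_le
        _ = (m : ℝ) / (8 * ℓ) := by push_cast; ring
    exact_mod_cast h1
  -- double counting
  have hcount : ∀ v ∈ H, Nat.choose ((C.filter (fun c => G.Adj v c)).card) ℓ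
      = ((C.powersetCard ℓ).filter (fun S => S ⊆ C.filter (fun c => G.Adj v c))).card := by
    intro v hv
    rw [← Finset.card_powersetCard]
    congr 1
    ext S
    simp only [Finset.mem_powersetCard, Finset.mem_filter]
    constructor
    · intro ⟨h1, h2⟩
      exact ⟨⟨h1.trans (Finset.filter_subset _ _), h2⟩, h1⟩
    · rintro ⟨⟨_, h2⟩, h3⟩; exact ⟨h3, h2⟩
  have hswap : ∑ v ∈ H, ((C.powersetCard ℓ).filter
        (fun S => S ⊆ C.filter (fun c => G.Adj v c))).card
      = ∑ S ∈ C.powersetCard ℓ, (H.filter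
        (fun v => S ⊆ C.filter (fun c => G.Adj v c))).card := by
    simp_rw [Finset.card_filter]
    exact Finset.sum_comm
  -- per-S bound
  have hperS : ∀ S ∈ C.powersetCard ℓ,
      (H.filter (fun v => S ⊆ C.filter (fun c => G.Adj v c))).card ≤ ℓ - 1 := by
    intro S hS
    by_contra hcon
    push_neg at hcon
    have hge : ℓ ≤ (H.filter (fun v => S ⊆ C.filter (fun c => G.Adj v c))).card := by omega
    obtain ⟨A, hA, hAcard⟩ := Finset.exists_subset_card_eq hge
    rw [Finset.mem_powersetCard] at hS
    apply hfree
    refine ⟨A, S, ?_, hAcard, hS.2, ?_⟩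
    · rw [Finset.disjoint_left]
      intro a haA haS
      have := hA haA
      rw [Finset.mem_filter] at this
      have := this.2 haS
      rw [Finset.mem_filter] at this
      exact G.loopless.irrefl a this.2
    · intro a haA b hbS
      have := hA haA
      rw [Finset.mem_filter] at this
      have := this.2 hbS
      rw [Finset.mem_filter] at this
      exact this.2
  -- conclude the double count inequality
  have hmain : H.card * Nat.choose D ℓ ≤ (ℓ - 1) * Nat.choose m ℓ := by
    calc H.card * Nat.choose D ℓ = ∑ _v ∈ H, Nat.choose D ℓ := by
          rw [Finset.sum_const, smul_eq_mul]
      _ ≤ ∑ v ∈ H, Nat.choose ((C.filter (fun c => G.Adj v c)).card) ℓ :=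
          Finset.sum_le_sum (fun v hv => Nat.choose_le_choose ℓ (hdeg v hv))
      _ = ∑ S ∈ C.powersetCard ℓ, (H.filter
          (fun v => S ⊆ C.filter (fun c => G.Adj v c))).card := by
          rw [← hswap]; exact Finset.sum_congr rfl hcount
      _ ≤ ∑ _S ∈ C.powersetCard ℓ, (ℓ - 1) := Finset.sum_le_sum hperS
      _ = (ℓ - 1) * Nat.choose m ℓ := by
          rw [Finset.sum_const, smul_eq_mul, Finset.card_powersetCard, mul_comm]
  -- key numeric inequality
  have hnum : (ℓ - 1) * Nat.choose m ℓ ≤ (3 * ℓ) ^ (2 * ℓ) * Nat.choose D ℓ := by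
    have hfac : 0 < Nat.factorial ℓ := Nat.factorial_pos ℓ
    refine Nat.le_of_mul_le_mul_right ?_ hfac
    have e1 : (ℓ - 1) * Nat.choose m ℓ * Nat.factorial ℓ = (ℓ - 1) * Nat.descFactorial m ℓ := by
      rw [Nat.descFactorial_eq_factorial_mul_choose]; ring
    have e2 : (3 * ℓ) ^ (2 * ℓ) * Nat.choose D ℓ * Nat.factorial ℓ
        = (3 * ℓ) ^ (2 * ℓ) * Nat.descFactorial D ℓ := by
      rw [Nat.descFactorial_eq_factorial_mul_choose]; ring
    rw [e1, e2]
    set E := D + 1 - ℓ with hE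
    have hE8 : 8 * ℓ ≤ E := by omega
    have hmE : m ≤ 9 * ℓ * E := by
      have h1 : m < 8 * ℓ * (D + 1) := by
        rw [hD]
        have h := Nat.div_add_mod m (8 * ℓ)
        have h' := Nat.mod_lt m (show 0 < 8 * ℓ by omega)
        nlinarith [h, h']
      have h2 : D + 1 = E + ℓ := by omega
      nlinarith [hE8, hℓ]
    calc (ℓ - 1) * Nat.descFactorial m ℓ ≤ ℓ * m ^ ℓ :=
          Nat.mul_le_mul (by omega) (Nat.descFactorial_le_pow m ℓ)
      _ ≤ ℓ * (9 * ℓ * E) ^ ℓ := Nat.mul_le_mul_left ℓ (Nat.pow_le_pow_left hmE ℓ)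
      _ ≤ ℓ ^ ℓ * ((9 * ℓ) ^ ℓ * E ^ ℓ) := by
          rw [mul_pow]
          exact Nat.mul_le_mul_right _ (Nat.le_self_pow (by omega) ℓ)
      _ = (3 * ℓ) ^ (2 * ℓ) * E ^ ℓ := by
          have h9 : (3 * ℓ) ^ (2 * ℓ) = (ℓ * (9 * ℓ)) ^ ℓ := by
            rw [pow_mul]; congr 1; ring
          rw [h9, mul_pow]; ring
      _ ≤ (3 * ℓ) ^ (2 * ℓ) * Nat.descFactorial D ℓ :=
          Nat.mul_le_mul_left _ (Nat.pow_sub_le_descFactorial D ℓ)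
  -- finish
  have hchoosepos : 0 < Nat.choose D ℓ := Nat.choose_pos hDl
  have := le_trans hmain hnum
  exact Nat.le_of_mul_le_mul_right this hchoosepos
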